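/- The swap distance and the Spearman distance between two linear orders u, v over m candidates satisfy d_swap(u,v) ≤ d_Spear(u,v) ≤ 2·d_swap(u,v), where d_Spear(u,v) = Σ_c |pos_v(c) − pos_u(c)| and d_swap(u,v) is the number of pairs of candidates ranked in opposite relative order by u and v. -/

import Mathlib

open Finset

noncomputable section
open scoped Classical

/-- Votes are bijections from candidates to positions. The swap (Kendall tau)
distance counts the pairs of candidates ranked in opposite relative orders by u
and v (each unordered discordant pair is counted once). -/
def dswap {m : ℕ} (u v : Equiv.Perm (Fin m)) : ℕ :=
  (Finset.univ.filter (fun p : Fin m × Fin m => u p.1 < u p.2 ∧ v p.2 < v p.1)).card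

/-- The Spearman footrule distance: total displacement of candidates. -/
def dSpear {m : ℕ} (u v : Equiv.Perm (Fin m)) : ℤ :=
  ∑ c, |((u c : ℕ) : ℤ) - ((v c : ℕ) : ℤ)|

namespace DG
variable {m : ℕ}
variable {m : ℕ}

def Inv (σ : Equiv.Perm (Fin m)) : Finset (Fin m × Fin m) :=
  Finset.univ.filter (fun p => p.1 < p.2 ∧ σ p.2 < σ p.1)

def Dv (σ : Equiv.Perm (Fin m)) : ℤ := ∑ c : Fin m, |((c : ℕ) : ℤ) - ((σ c : ℕ) : ℤ)|

lemma mem_Inv {σ : Equiv.Perm (Fin m)} {p : Fin m × Fin m} :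
    p ∈ Inv σ ↔ p.1 < p.2 ∧ σ p.2 < σ p.1 := by
  simp [Inv]

lemma Dv_nonneg (σ : Equiv.Perm (Fin m)) : 0 ≤ Dv σ :=
  Finset.sum_nonneg fun c _ => abs_nonneg _

lemma Dv_eq_zero {σ : Equiv.Perm (Fin m)} (h : (Inv σ).card = 0) : Dv σ = 0 := by
  have hempty : Inv σ = ∅ := Finset.card_eq_zero.mp h
  have mono : ∀ p q : Fin m, p < q → σ p < σ q := by
    intro p q hpq
    have hnm : (p, q) ∉ Inv σ := by rw [hempty]; exact notMem_empty _
    rw [mem_Inv] at hnm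
    push_neg at hnm
    have hle := hnm hpq
    have hne : σ p ≠ σ q := fun he => (ne_of_lt hpq) (σ.injective he)
    exact lt_of_le_of_ne hle hne
  have hle : ∀ c : Fin m, (c : ℕ) ≤ σ c := by
    intro c
    have hmaps : ∀ d ∈ Finset.Iic c, σ d ∈ Finset.Iic (σ c) := by
      intro d hd
      rw [Finset.mem_Iic] at hd ⊢
      rcases eq_or_lt_of_le hd with rfl | hlt
      · exact le_refl _
      · exact le_of_lt (mono _ _ hlt)
    have hcard := Finset.card_le_card_of_injOn σ hmaps (σ.injective.injOn)
    rw [Fin.card_Iic, Fin.card_Iic] at hcard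
    omega
  have hsum : ∑ c : Fin m, (((σ c : ℕ) : ℤ) - ((c : ℕ) : ℤ)) = 0 := by
    rw [Finset.sum_sub_distrib]
    have := Equiv.sum_comp σ (fun x : Fin m => ((x : ℕ) : ℤ))
    rw [this]; ring
  have heach := (Finset.sum_eq_zero_iff_of_nonneg (fun c _ => by
    have := hle c
    simp only [sub_nonneg]
    exact_mod_cast this)).mp hsum
  unfold Dv
  apply Finset.sum_eq_zero
  intro c _
  have := heach c (mem_univ c)
  rw [abs_eq_zero]
  omega

/-- Existence of an adjacent inversion when there is any inversion. -/
lemma exists_adjacent {σ : Equiv.Perm (Fin m)} (h : (Inv σ).card ≠ 0) :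
    ∃ i j : Fin m, (i : ℕ) + 1 = (j : ℕ) ∧ σ j < σ i := by
  by_contra hcon
  push_neg at hcon
  have adj : ∀ i j : Fin m, (i : ℕ) + 1 = (j : ℕ) → σ i < σ j := by
    intro i j hij
    have hle := hcon i j hij
    have hne : σ j ≠ σ i := fun he => by
      have : j = i := σ.injective he
      subst this; omega
    rcases lt_or_eq_of_le hle with h' | h'
    · exact h'
    · exact absurd h' hne.symm
  have mono : ∀ d : ℕ, ∀ p q : Fin m, (q : ℕ) = (p : ℕ) + d + 1 → σ p < σ q := by
    intro d
    induction d with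
    | zero => intro p q hq; exact adj p q (by omega)
    | succ d ih =>
      intro p q hq
      have hr : (p : ℕ) + d + 1 < m := by have := q.isLt; omega
      set r : Fin m := ⟨(p : ℕ) + d + 1, hr⟩
      exact lt_trans (ih p r rfl) (adj r q (by simp [r]; omega))
  apply h
  rw [Finset.card_eq_zero]
  ext p
  simp only [mem_Inv, notMem_empty, iff_false, not_and]
  intro hpq
  have h1 : (p.1 : ℕ) < p.2 := hpq
  have := mono ((p.2 : ℕ) - p.1 - 1) p.1 p.2 (by omega)
  exact not_lt_of_gt this


-- swap ordering helper
lemma swap_lt_swap {i j p q : Fin m} (hadj : (i : ℕ) + 1 = (j : ℕ)) (hpq : p < q)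
    (hne : ¬(p = i ∧ q = j)) : Equiv.swap i j p < Equiv.swap i j q := by
  have hij : i < j := by rw [Fin.lt_def]; omega
  by_cases hpi : p = i
  · subst hpi
    have hqj : q ≠ j := fun h => hne ⟨rfl, h⟩
    have hqi : q ≠ p := (ne_of_lt hpq).symm
    rw [Equiv.swap_apply_left, Equiv.swap_apply_of_ne_of_ne hqi hqj]
    rw [Fin.lt_def] at hpq ⊢
    have : (q : ℕ) ≠ (j : ℕ) := fun h => hqj (Fin.ext h)
    omega
  · by_cases hpj : p = j
    · subst hpj
      have hqi : q ≠ i := fun h => by subst h; exact absurd (lt_trans hij hpq) (lt_irrefl _)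
      have hqj : q ≠ p := (ne_of_lt hpq).symm
      rw [Equiv.swap_apply_right, Equiv.swap_apply_of_ne_of_ne hqi hqj]
      exact lt_trans hij hpq
    · rw [Equiv.swap_apply_of_ne_of_ne hpi hpj]
      by_cases hqi : q = i
      · subst hqi
        rw [Equiv.swap_apply_left]
        exact lt_trans hpq hij
      · by_cases hqj : q = j
        · subst hqj
          rw [Equiv.swap_apply_right]
          rw [Fin.lt_def] at hpq ⊢
          have : (p : ℕ) ≠ (i : ℕ) := fun h => hpi (Fin.ext h)
          omega
        · rw [Equiv.swap_apply_of_ne_of_ne hqi hqj]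
          exact hpq

lemma tau_apply (σ : Equiv.Perm (Fin m)) (i j x : Fin m) :
    (σ * Equiv.swap i j) x = σ (Equiv.swap i j x) := rfl

lemma Dv_sub (σ : Equiv.Perm (Fin m)) {i j : Fin m} (hij : i ≠ j) :
    Dv σ - Dv (σ * Equiv.swap i j)
      = (|((i:ℕ):ℤ) - ((σ i : ℕ):ℤ)| + |((j:ℕ):ℤ) - ((σ j : ℕ):ℤ)|)
        - (|((i:ℕ):ℤ) - ((σ j : ℕ):ℤ)| + |((j:ℕ):ℤ) - ((σ i : ℕ):ℤ)|) := by
  set τ := σ * Equiv.swap i j with hτ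
  set h : Fin m → ℤ := fun c => |((c:ℕ):ℤ) - ((σ c : ℕ):ℤ)| - |((c:ℕ):ℤ) - ((τ c : ℕ):ℤ)| with hh
  have key : Dv σ - Dv τ = ∑ c : Fin m, h c := by
    unfold Dv; rw [← Finset.sum_sub_distrib]
  rw [key]
  have hsub : ({i, j} : Finset (Fin m)) ⊆ Finset.univ := Finset.subset_univ _
  have hzero : ∀ x ∈ Finset.univ, x ∉ ({i, j} : Finset (Fin m)) → h x = 0 := by
    intro x _ hx
    simp only [Finset.mem_insert, Finset.mem_singleton] at hx
    push_neg at hx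
    have : τ x = σ x := by
      rw [tau_apply, Equiv.swap_apply_of_ne_of_ne hx.1 hx.2]
    simp [hh, this]
  rw [← Finset.sum_subset hsub hzero, Finset.sum_pair hij]
  have hτi : τ i = σ j := by rw [tau_apply, Equiv.swap_apply_left]
  have hτj : τ j = σ i := by rw [tau_apply, Equiv.swap_apply_right]
  simp only [hh, hτi, hτj]
  ring

lemma upper_step_card (σ : Equiv.Perm (Fin m)) {i j : Fin m} (hadj : (i : ℕ) + 1 = (j : ℕ))
    (hinv : σ j < σ i) : (Inv (σ * Equiv.swap i j)).card + 1 ≤ (Inv σ).card := by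
  set τ := σ * Equiv.swap i j with hτ
  have hijlt : i < j := by rw [Fin.lt_def]; omega
  have hij : i ≠ j := ne_of_lt hijlt
  have hmem : (i, j) ∈ Inv σ := mem_Inv.mpr ⟨hijlt, hinv⟩
  have hcard : (Inv τ).card ≤ ((Inv σ).erase (i, j)).card := by
    apply Finset.card_le_card_of_injOn (fun p => (Equiv.swap i j p.1, Equiv.swap i j p.2))
    · intro p hp
      simp only [Finset.mem_coe] at hp ⊢
      rw [mem_Inv] at hp
      obtain ⟨hlt, hinv'⟩ := hp
      have hne : ¬(p.1 = i ∧ p.2 = j) := by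
        rintro ⟨h1, h2⟩
        rw [h1, h2] at hinv'
        rw [tau_apply, tau_apply, Equiv.swap_apply_left, Equiv.swap_apply_right] at hinv'
        exact absurd (lt_trans hinv hinv') (lt_irrefl _)
      rw [Finset.mem_erase]
      constructor
      · intro hcon
        have h1 : Equiv.swap i j p.1 = i := congrArg Prod.fst hcon
        have h2 : Equiv.swap i j p.2 = j := congrArg Prod.snd hcon
        have hp1 : p.1 = j := by
          have := congrArg (Equiv.swap i j) h1
          rwa [Equiv.swap_apply_self, Equiv.swap_apply_left] at this
        have hp2 : p.2 = i := by
          have := congrArg (Equiv.swap i j) h2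
          rwa [Equiv.swap_apply_self, Equiv.swap_apply_right] at this
        rw [hp1, hp2] at hlt
        exact absurd (lt_trans hijlt hlt) (lt_irrefl _)
      · exact mem_Inv.mpr ⟨swap_lt_swap hadj hlt hne, hinv'⟩
    · intro p _ q _ hpq
      have h1 : Equiv.swap i j p.1 = Equiv.swap i j q.1 := congrArg Prod.fst hpq
      have h2 : Equiv.swap i j p.2 = Equiv.swap i j q.2 := congrArg Prod.snd hpq
      exact Prod.ext ((Equiv.swap i j).injective h1) ((Equiv.swap i j).injective h2)
  rw [Finset.card_erase_of_mem hmem] at hcard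
  have hpos : 0 < (Inv σ).card := Finset.card_pos.mpr ⟨_, hmem⟩
  omega

lemma upper_step_Dv (σ : Equiv.Perm (Fin m)) {i j : Fin m} (hadj : (i : ℕ) + 1 = (j : ℕ)) :
    Dv σ ≤ Dv (σ * Equiv.swap i j) + 2 := by
  have hij : i ≠ j := by intro h; rw [h] at hadj; omega
  have hd := Dv_sub σ hij
  have e1 : |((i:ℕ):ℤ) - ((σ i : ℕ):ℤ)| - |((j:ℕ):ℤ) - ((σ i : ℕ):ℤ)| ≤ 1 := by
    have := abs_sub_abs_le_abs_sub (((i:ℕ):ℤ) - ((σ i : ℕ):ℤ)) (((j:ℕ):ℤ) - ((σ i : ℕ):ℤ))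
    have h2 : |(((i:ℕ):ℤ) - ((σ i : ℕ):ℤ)) - (((j:ℕ):ℤ) - ((σ i : ℕ):ℤ))| = 1 := by
      have : (((i:ℕ):ℤ) - ((σ i : ℕ):ℤ)) - (((j:ℕ):ℤ) - ((σ i : ℕ):ℤ)) = -1 := by
        push_cast; omega
      rw [this]; decide
    linarith
  have e2 : |((j:ℕ):ℤ) - ((σ j : ℕ):ℤ)| - |((i:ℕ):ℤ) - ((σ j : ℕ):ℤ)| ≤ 1 := by
    have := abs_sub_abs_le_abs_sub (((j:ℕ):ℤ) - ((σ j : ℕ):ℤ)) (((i:ℕ):ℤ) - ((σ j : ℕ):ℤ))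
    have h2 : |(((j:ℕ):ℤ) - ((σ j : ℕ):ℤ)) - (((i:ℕ):ℤ) - ((σ j : ℕ):ℤ))| = 1 := by
      have : (((j:ℕ):ℤ) - ((σ j : ℕ):ℤ)) - (((i:ℕ):ℤ) - ((σ j : ℕ):ℤ)) = 1 := by
        push_cast; omega
      rw [this]; decide
    linarith
  linarith

lemma upper (n : ℕ) : ∀ σ : Equiv.Perm (Fin m), (Inv σ).card ≤ n →
    Dv σ ≤ 2 * ((Inv σ).card : ℤ) := by
  induction n with
  | zero =>
    intro σ h
    have h0 : (Inv σ).card = 0 := by omega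
    rw [Dv_eq_zero h0, h0]
    simp
  | succ n ih =>
    intro σ h
    by_cases h0 : (Inv σ).card = 0
    · rw [Dv_eq_zero h0, h0]; simp
    · obtain ⟨i, j, hadj, hinv⟩ := exists_adjacent h0
      have hc := upper_step_card σ hadj hinv
      have hD := upper_step_Dv σ hadj
      have hih := ih (σ * Equiv.swap i j) (by omega)
      have hcast : ((Inv (σ * Equiv.swap i j)).card : ℤ) + 1 ≤ ((Inv σ).card : ℤ) := by exact_mod_cast hc
      linarith


lemma lower_step (σ : Equiv.Perm (Fin m)) (h0 : (Inv σ).card ≠ 0) :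
    ∃ (τ : Equiv.Perm (Fin m)) (t : ℕ),
      (Inv τ).card < (Inv σ).card ∧
      (Inv σ).card ≤ (Inv τ).card + 1 + 2 * t ∧
      Dv τ + 2 * ((t : ℤ) + 1) ≤ Dv σ := by
  -- the set of non-fixed points is nonempty
  have hF : (Finset.univ.filter (fun c : Fin m => σ c ≠ c)).Nonempty := by
    by_contra hcon
    rw [Finset.not_nonempty_iff_eq_empty] at hcon
    apply h0
    rw [Finset.card_eq_zero]
    ext p
    simp only [mem_Inv, notMem_empty, iff_false, not_and]
    intro hlt
    have h1 : σ p.1 = p.1 := by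
      by_contra hne
      have : p.1 ∈ Finset.univ.filter (fun c : Fin m => σ c ≠ c) :=
        Finset.mem_filter.mpr ⟨mem_univ _, hne⟩
      rw [hcon] at this; exact notMem_empty _ this
    have h2 : σ p.2 = p.2 := by
      by_contra hne
      have : p.2 ∈ Finset.univ.filter (fun c : Fin m => σ c ≠ c) :=
        Finset.mem_filter.mpr ⟨mem_univ _, hne⟩
      rw [hcon] at this; exact notMem_empty _ this
    rw [h1, h2]
    exact not_lt_of_gt hlt
  set F := Finset.univ.filter (fun c : Fin m => σ c ≠ c) with hFdef
  set i := F.min' hF with hidef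
  have hi : σ i ≠ i := (Finset.mem_filter.mp (F.min'_mem hF)).2
  have hlow : ∀ c : Fin m, c < i → σ c = c := by
    intro c hc
    by_contra hne
    have hmem : c ∈ F := Finset.mem_filter.mpr ⟨mem_univ _, hne⟩
    exact absurd (F.min'_le c hmem) (not_le_of_gt hc)
  have key : ∀ l : Fin m, ¬ l < i → ¬ σ l < i := by
    intro l hl hsl
    have h1 : σ (σ l) = σ l := hlow _ hsl
    have h2 : σ l = l := σ.injective h1
    rw [h2] at hsl
    exact hl hsl
  have ha : i < σ i := lt_of_le_of_ne (not_lt.mp (key i (lt_irrefl i))) (Ne.symm hi)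
  set j := σ⁻¹ i with hjdef
  have hj : σ j = i := Equiv.apply_symm_apply σ i
  have hij : i < j := by
    rcases lt_trichotomy i j with h | h | h
    · exact h
    · exfalso; apply hi; rw [← h] at hj; exact hj
    · exfalso; have := hlow j h; rw [hj] at this
      exact (ne_of_lt h) this.symm
  have hijne : i ≠ j := ne_of_lt hij
  have hli : ∀ l : Fin m, i < l → l ≠ j → i < σ l := by
    intro l hl hlj
    have h1 : σ l ≠ i := by
      intro he
      apply hlj
      rw [← hj] at he
      exact σ.injective he
    exact lt_of_le_of_ne (not_lt.mp (key l (not_lt_of_gt hl))) (Ne.symm h1)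
  set τ := σ * Equiv.swap i j with hτdef
  have hτi : τ i = i := by rw [hτdef, tau_apply, Equiv.swap_apply_left, hj]
  have hτj : τ j = σ i := by rw [hτdef, tau_apply, Equiv.swap_apply_right]
  have hτo : ∀ l : Fin m, l ≠ i → l ≠ j → τ l = σ l := by
    intro l h1 h2
    rw [hτdef, tau_apply, Equiv.swap_apply_of_ne_of_ne h1 h2]
  have keyτ : ∀ l : Fin m, ¬ l < i → ¬ τ l < i := by
    intro l hl
    by_cases h1 : l = i
    · rw [h1, hτi]; exact lt_irrefl i
    · by_cases h2 : l = j
      · rw [h2, hτj]; exact not_lt_of_gt ha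
      · rw [hτo l h1 h2]; exact key l hl
  set T := Finset.univ.filter (fun l : Fin m => i < l ∧ l < j ∧ σ l < σ i) with hTdef
  set t := T.card with htdef
  -- cardinality bounds for T
  have ht1 : t + 1 ≤ (j : ℕ) - (i : ℕ) := by
    have hsub : T ⊆ Finset.Ioo i j := by
      intro l hl
      have := Finset.mem_filter.mp hl
      exact Finset.mem_Ioo.mpr ⟨this.2.1, this.2.2.1⟩
    have := Finset.card_le_card hsub
    rw [Fin.card_Ioo] at this
    have hvij : (i : ℕ) < (j : ℕ) := hij
    omega
  have ht2 : t + 1 ≤ (σ i : ℕ) - (i : ℕ) := by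
    have hmaps : ∀ l ∈ T, σ l ∈ Finset.Ioo i (σ i) := by
      intro l hl
      have hm := Finset.mem_filter.mp hl
      exact Finset.mem_Ioo.mpr ⟨hli l hm.2.1 (ne_of_lt hm.2.2.1), hm.2.2.2⟩
    have := Finset.card_le_card_of_injOn σ hmaps (σ.injective.injOn)
    rw [Fin.card_Ioo] at this
    have hvia : (i : ℕ) < (σ i : ℕ) := ha
    omega
  -- no inversion of σ starts at j, no inversion of τ starts at i
  have noj : ∀ r : Fin m × Fin m, r ∈ Inv σ → r.1 ≠ j := by
    intro r hr hrj
    have hm := mem_Inv.mp hr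
    rw [hrj, hj] at hm
    have h1 : i < r.2 := lt_trans hij (hrj ▸ hm.1)
    exact key r.2 (not_lt_of_gt h1) hm.2
  have noi : ∀ r : Fin m × Fin m, r ∈ Inv τ → r.1 ≠ i := by
    intro r hr hri
    have hm := mem_Inv.mp hr
    rw [hri, hτi] at hm
    exact keyτ r.2 (not_lt_of_gt (hri ▸ hm.1)) hm.2
  have hmemij : (i, j) ∈ Inv σ := mem_Inv.mpr ⟨hij, by rw [hj]; exact ha⟩
  refine ⟨τ, t, ?_, ?_, ?_⟩
  · -- (Inv τ).card < (Inv σ).card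
    have hcard : (Inv τ).card ≤ ((Inv σ).erase (i, j)).card := by
      apply Finset.card_le_card_of_injOn
        (fun p => if p.1 = j then (i, p.2) else p)
      · intro p hp
        have hm := mem_Inv.mp hp
        obtain ⟨hlt, hinvp⟩ := hm
        have hp1i : p.1 ≠ i := noi p hp
        simp only [Finset.mem_coe]
        by_cases hpj : p.1 = j
        · rw [if_pos hpj]
          rw [Finset.mem_erase]
          have hp2j : p.2 ≠ j := by
            intro he; rw [hpj, he] at hlt; exact absurd hlt (lt_irrefl _)
          constructor
          · intro hcon
            exact hp2j (congrArg Prod.snd hcon)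
          · rw [mem_Inv]
            have hp2i : p.2 ≠ i := by
              intro he
              rw [he] at hlt
              exact absurd (lt_trans hij (hpj ▸ hlt)) (lt_irrefl _)
            constructor
            · exact lt_trans hij (hpj ▸ hlt)
            · have h1 : τ p.2 = σ p.2 := hτo p.2 hp2i hp2j
              have h2 : τ p.1 = σ i := by rw [hpj, hτj]
              rw [h1, h2] at hinvp
              exact hinvp
        · rw [if_neg hpj]
          have hp2i : p.2 ≠ i := by
            intro he
            rw [he, hτi] at hinvp
            have hlt1 : p.1 < i := he ▸ hlt
            rw [hτo p.1 hp1i hpj, hlow p.1 hlt1] at hinvp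
            exact absurd (lt_trans hinvp hlt1) (lt_irrefl _)
          rw [Finset.mem_erase]
          constructor
          · intro hcon
            exact hp1i (congrArg Prod.fst hcon)
          · rw [mem_Inv]
            refine ⟨hlt, ?_⟩
            by_cases hp2j : p.2 = j
            · rw [hτo p.1 hp1i hpj, hp2j, hτj] at hinvp
              rw [hp2j, hj]
              calc i < σ i := ha
                _ < σ p.1 := hinvp
            · rw [hτo p.1 hp1i hpj, hτo p.2 hp2i hp2j] at hinvp
              exact hinvp
      · intro p hp q hq he
        simp only at he
        by_cases cp : p.1 = j <;> by_cases cq : q.1 = j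
        · rw [if_pos cp, if_pos cq] at he
          injection he with hh1 hh2
          exact Prod.ext (cp.trans cq.symm) hh2
        · rw [if_pos cp, if_neg cq] at he
          exact absurd (congrArg Prod.fst he).symm (noi q hq)
        · rw [if_neg cp, if_pos cq] at he
          exact absurd (congrArg Prod.fst he) (noi p hp)
        · rw [if_neg cp, if_neg cq] at he; exact he
    rw [Finset.card_erase_of_mem hmemij] at hcard
    have hpos : 0 < (Inv σ).card := Finset.card_pos.mpr ⟨_, hmemij⟩
    omega
  · -- (Inv σ).card ≤ (Inv τ).card + 1 + 2*t
    set E : Finset (Fin m × Fin m) :=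
      insert (i, j) ((T.image fun l => (i, l)) ∪ (T.image fun l => (l, j))) with hEdef
    have hstep : (Inv σ).card ≤ ((Inv τ) ∪ E).card := by
      apply Finset.card_le_card_of_injOn
        (fun p => if p.1 = i ∧ j < p.2 then (j, p.2) else p)
      · intro p hp
        have hm := mem_Inv.mp hp
        obtain ⟨hlt, hinvp⟩ := hm
        simp only [Finset.mem_coe]
        by_cases hcnd : p.1 = i ∧ j < p.2
        · rw [if_pos hcnd]
          apply Finset.mem_union_left
          rw [mem_Inv]
          refine ⟨hcnd.2, ?_⟩
          have hp2i : p.2 ≠ i := ne_of_gt (lt_trans hij hcnd.2)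
          have hp2j : p.2 ≠ j := ne_of_gt hcnd.2
          rw [hτo p.2 hp2i hp2j, hτj]
          rw [hcnd.1] at hinvp
          exact hinvp
        · rw [if_neg hcnd]
          push_neg at hcnd
          by_cases h1 : p.1 = i
          · have h2 : p.2 ≤ j := hcnd h1
            rcases eq_or_lt_of_le h2 with h2e | h2l
            · apply Finset.mem_union_right
              rw [hEdef, Finset.mem_insert]
              left
              exact Prod.ext h1 h2e
            · apply Finset.mem_union_right
              rw [hEdef, Finset.mem_insert]
              right
              apply Finset.mem_union_left
              rw [Finset.mem_image]
              refine ⟨p.2, ?_, ?_⟩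
              · rw [hTdef, Finset.mem_filter]
                refine ⟨mem_univ _, h1 ▸ hlt, h2l, ?_⟩
                rw [h1] at hinvp
                exact hinvp
              · exact Prod.ext h1.symm rfl
          · by_cases h2 : p.2 = j
            · have hgt : i < p.1 := by
                rcases lt_trichotomy p.1 i with hc | hc | hc
                · exfalso
                  rw [h2, hj, hlow p.1 hc] at hinvp
                  exact absurd (lt_trans hinvp hc) (lt_irrefl _)
                · exact absurd hc h1
                · exact hc
              have hltj : p.1 < j := h2 ▸ hlt
              have hne : σ p.1 ≠ σ i := fun he => h1 (σ.injective he)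
              rcases hne.lt_or_gt with hc | hc
              · -- σ p.1 < σ i : extra element (p.1, j)
                apply Finset.mem_union_right
                rw [hEdef, Finset.mem_insert]
                right
                apply Finset.mem_union_right
                rw [Finset.mem_image]
                refine ⟨p.1, ?_, ?_⟩
                · rw [hTdef, Finset.mem_filter]
                  exact ⟨mem_univ _, hgt, hltj, hc⟩
                · exact Prod.ext rfl h2.symm
              · -- σ i < σ p.1 : inversion of τ
                apply Finset.mem_union_left
                rw [mem_Inv]
                refine ⟨hlt, ?_⟩
                rw [hτo p.1 h1 (ne_of_lt hltj), h2, hτj]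
                exact hc
            · have h3 : p.2 ≠ i := by
                intro he
                have hlt1 : p.1 < i := he ▸ hlt
                rw [he, hlow p.1 hlt1] at hinvp
                exact absurd (lt_trans ha (lt_trans hinvp hlt1)) (lt_irrefl _)
              have h4 : p.1 ≠ j := noj p hp
              apply Finset.mem_union_left
              rw [mem_Inv]
              refine ⟨hlt, ?_⟩
              rw [hτo p.1 h1 h4, hτo p.2 h3 h2]
              exact hinvp
      · intro p hp q hq he
        simp only at he
        by_cases cp : p.1 = i ∧ j < p.2 <;> by_cases cq : q.1 = i ∧ j < q.2
        · rw [if_pos cp, if_pos cq] at he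
          injection he with hh1 hh2
          exact Prod.ext (cp.1.trans cq.1.symm) hh2
        · rw [if_pos cp, if_neg cq] at he
          exact absurd (congrArg Prod.fst he).symm (noj q hq)
        · rw [if_neg cp, if_pos cq] at he
          exact absurd (congrArg Prod.fst he) (noj p hp)
        · rw [if_neg cp, if_neg cq] at he; exact he
    have hE : E.card ≤ 1 + (t + t) := by
      calc E.card ≤ ((T.image fun l => (i, l)) ∪ (T.image fun l => (l, j))).card + 1 :=
            Finset.card_insert_le _ _
        _ ≤ ((T.image fun l => (i, l)).card + (T.image fun l => (l, j)).card) + 1 := by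
            have := Finset.card_union_le (T.image fun l => (i, l)) (T.image fun l => (l, j))
            omega
        _ ≤ (t + t) + 1 := by
            have h1 := Finset.card_image_le (s := T) (f := fun l => (i, l))
            have h2 := Finset.card_image_le (s := T) (f := fun l => (l, j))
            omega
        _ = 1 + (t + t) := by ring
    have := Finset.card_union_le (Inv τ) E
    omega
  · -- Dv bound
    have hd := Dv_sub σ hijne
    rw [← hτdef, hj] at hd
    have hvia : (i : ℕ) < (σ i : ℕ) := ha
    have hvij : (i : ℕ) < (j : ℕ) := hij
    have h1 : |((i:ℕ):ℤ) - ((σ i : ℕ):ℤ)| = ((σ i : ℕ):ℤ) - ((i:ℕ):ℤ) := by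
      rw [abs_sub_comm]
      apply abs_of_nonneg
      have : ((i:ℕ):ℤ) < ((σ i : ℕ):ℤ) := by exact_mod_cast hvia
      linarith
    have h2 : |((j:ℕ):ℤ) - ((i:ℕ):ℤ)| = ((j:ℕ):ℤ) - ((i:ℕ):ℤ) := by
      apply abs_of_nonneg
      have : ((i:ℕ):ℤ) < ((j:ℕ):ℤ) := by exact_mod_cast hvij
      linarith
    have h3 : |((i:ℕ):ℤ) - ((i:ℕ):ℤ)| = 0 := by simp
    rw [h1, h2, h3] at hd
    have hA : (t : ℤ) + 1 ≤ ((j:ℕ):ℤ) - ((i:ℕ):ℤ) := by omega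
    have hB : (t : ℤ) + 1 ≤ ((σ i : ℕ):ℤ) - ((i:ℕ):ℤ) := by omega
    rcases le_total ((σ i : ℕ):ℤ) ((j:ℕ):ℤ) with hc | hc
    · have h4 : |((j:ℕ):ℤ) - ((σ i : ℕ):ℤ)| = ((j:ℕ):ℤ) - ((σ i : ℕ):ℤ) :=
        abs_of_nonneg (by linarith)
      rw [h4] at hd
      linarith
    · have h4 : |((j:ℕ):ℤ) - ((σ i : ℕ):ℤ)| = ((σ i : ℕ):ℤ) - ((j:ℕ):ℤ) := by
        rw [abs_sub_comm]
        exact abs_of_nonneg (by linarith)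
      rw [h4] at hd
      linarith

lemma lower (n : ℕ) : ∀ σ : Equiv.Perm (Fin m), (Inv σ).card ≤ n →
    ((Inv σ).card : ℤ) ≤ Dv σ := by
  induction n with
  | zero =>
    intro σ h
    have h0 : (Inv σ).card = 0 := by omega
    rw [h0]
    simpa using Dv_nonneg σ
  | succ n ih =>
    intro σ h
    by_cases h0 : (Inv σ).card = 0
    · rw [h0]; simpa using Dv_nonneg σ
    · obtain ⟨τ, t, hlt, hup, hDv⟩ := lower_step σ h0
      have hih := ih τ (by omega)
      have hcast : ((Inv σ).card : ℤ) ≤ ((Inv τ).card : ℤ) + 1 + 2 * (t : ℤ) := by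
        exact_mod_cast hup
      linarith


end DG


lemma dswap_eq {m : ℕ} (u v : Equiv.Perm (Fin m)) :
    dswap u v = (DG.Inv (v * u⁻¹)).card := by
  unfold dswap DG.Inv
  apply Finset.card_bij (fun p _ => (u p.1, u p.2))
  · intro p hp
    rw [Finset.mem_filter] at hp ⊢
    refine ⟨mem_univ _, ?_, ?_⟩
    · exact hp.2.1
    · simp only [Equiv.Perm.mul_apply, Equiv.Perm.inv_def, Equiv.symm_apply_apply]
      exact hp.2.2
  · intro p hp q hq he
    have h1 : u p.1 = u q.1 := congrArg Prod.fst he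
    have h2 : u p.2 = u q.2 := congrArg Prod.snd he
    exact Prod.ext (u.injective h1) (u.injective h2)
  · intro q hq
    rw [Finset.mem_filter] at hq
    refine ⟨(u⁻¹ q.1, u⁻¹ q.2), ?_, ?_⟩
    · rw [Finset.mem_filter]
      refine ⟨mem_univ _, ?_, ?_⟩
      · simpa using hq.2.1
      · have := hq.2.2
        simpa [Equiv.Perm.mul_apply] using this
    · simp
lemma dSpear_eq {m : ℕ} (u v : Equiv.Perm (Fin m)) :
    dSpear u v = DG.Dv (v * u⁻¹) := by
  unfold dSpear DG.Dv
  rw [← Equiv.sum_comp u (fun x : Fin m => |((x : ℕ) : ℤ) - (((v * u⁻¹) x : ℕ) : ℤ)|)]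
  apply Finset.sum_congr rfl
  intro c _
  simp [Equiv.Perm.mul_apply]

/-- Diaconis–Graham inequalities: d_swap(u,v) ≤ d_Spear(u,v) ≤ 2·d_swap(u,v). -/
theorem stmt19 {m : ℕ} (u v : Equiv.Perm (Fin m)) :
    (dswap u v : ℤ) ≤ dSpear u v ∧ dSpear u v ≤ 2 * (dswap u v : ℤ) := by
  rw [dswap_eq, dSpear_eq]
  exact ⟨DG.lower _ _ le_rfl, DG.upper _ _ le_rfl⟩

end
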